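/- Let S be a noetherian ℕ^r-graded algebra over a field k with S₀ = k and homogeneous maximal ideal 𝓜 (the ideal of all elements of nonzero degree). Let ⋯ → D_{p+1} → D_p → ⋯ → D₁ → D₀ → 0 be an exact sequence of finitely generated ℤ^r-graded S-modules such that the image of D_{p+1} → D_p is contained in 𝓜·D_p for all p ≥ 0. For each p let {v_{pq}} ⊆ ℤ^r be the multiset of degrees of a minimal homogeneous generating system of D_p, let n_p ∈ ℤ^r be the componentwise minimum of the v_{pq}, and let m_p be the minimum of the v_{pq} in the lexicographic order. Then for every p: (i) n_p ≤ n_{p+1} componentwise, and (ii) m_p <_lex m_{p+1} strictly in the lexicographic order. -/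

import Mathlib

open DirectSum

section aux

variable {S : Type*} [CommRing S] {r : ℕ}
  (𝒜 : (Fin r → ℤ) → AddSubgroup S) [DirectSum.Decomposition 𝒜]
  {M : Type*} [AddCommGroup M] [Module S M]
  (ℳ : (Fin r → ℤ) → AddSubgroup M) [DirectSum.Decomposition ℳ]

theorem my_decompose_sum {ι' : Type*} (t : Finset ι') (g : ι' → M) (u : Fin r → ℤ) :
    (DirectSum.decompose ℳ (∑ i ∈ t, g i) u : M)
      = ∑ i ∈ t, (DirectSum.decompose ℳ (g i) u : M) := by
  classical
  induction t using Finset.induction with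
  | empty => simp
  | insert _ _ h ih =>
      rw [Finset.sum_insert h, Finset.sum_insert h, DirectSum.decompose_add,
        DirectSum.add_apply, AddSubgroup.coe_add, ih]

theorem my_comp_smul
    (hsmul : ∀ v w : Fin r → ℤ, ∀ s ∈ 𝒜 v, ∀ t ∈ ℳ w, s • t ∈ ℳ (v + w))
    {w : Fin r → ℤ} {s : S} (hs : s ∈ 𝒜 w) (m : M) (u : Fin r → ℤ) :
    (DirectSum.decompose ℳ (s • m) u : M)
      = s • (DirectSum.decompose ℳ m (u - w) : M) := by
  classical
  conv_lhs => rw [← DirectSum.sum_support_decompose ℳ m, Finset.smul_sum]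
  rw [my_decompose_sum]
  have hterm : ∀ i : Fin r → ℤ,
      (DirectSum.decompose ℳ (s • (DirectSum.decompose ℳ m i : M)) u : M)
        = if i = u - w then s • (DirectSum.decompose ℳ m i : M) else 0 := by
    intro i
    rw [DirectSum.decompose_of_mem ℳ (hsmul w i s hs _ (DirectSum.decompose ℳ m i).2),
      DirectSum.coe_of_apply]
    by_cases h : i = u - w
    · rw [if_pos h, if_pos (by rw [h]; abel)]
    · rw [if_neg h, if_neg (fun hc => h (by rw [← hc]; abel))]
      simp
  simp_rw [hterm]
  rw [Finset.sum_ite_eq' ((DirectSum.decompose ℳ m).support) (u - w)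
    (fun i => s • (DirectSum.decompose ℳ m i : M))]
  by_cases h : u - w ∈ (DirectSum.decompose ℳ m).support
  · rw [if_pos h]
  · rw [if_neg h, DFinsupp.notMem_support_iff.mp h]
    simp

end aux

section aux2

set_option linter.unusedSectionVars false
open scoped Classical

variable {S : Type*} [CommRing S] {r : ℕ}
  (𝒜 : (Fin r → ℤ) → AddSubgroup S) [DirectSum.Decomposition 𝒜]
  {M : Type*} [AddCommGroup M] [Module S M]
  (ℳ : (Fin r → ℤ) → AddSubgroup M) [DirectSum.Decomposition ℳ]

theorem my_comp_smul' (hsmul : ∀ v w : Fin r → ℤ, ∀ s ∈ 𝒜 v, ∀ t ∈ ℳ w, s • t ∈ ℳ (v + w))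
    (a : S) (x : M) (u : Fin r → ℤ) :
    (DirectSum.decompose ℳ (a • x) u : M)
      = ∑ w ∈ (DirectSum.decompose 𝒜 a).support,
          ((DirectSum.decompose 𝒜 a w : S) • (DirectSum.decompose ℳ x (u - w) : M)) := by
  classical
  conv_lhs => rw [← DirectSum.sum_support_decompose 𝒜 a, Finset.sum_smul]
  rw [my_decompose_sum]
  exact Finset.sum_congr rfl fun w _ =>
    my_comp_smul 𝒜 ℳ hsmul (DirectSum.decompose 𝒜 a w).2 x u

theorem my_support_bound [Module.Finite S M]
    (hsupp : ∀ v : Fin r → ℤ, (∃ j, v j < 0) → 𝒜 v = ⊥)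
    (hsmul : ∀ v w : Fin r → ℤ, ∀ s ∈ 𝒜 v, ∀ t ∈ ℳ w, s • t ∈ ℳ (v + w)) :
    ∃ c : Fin r → ℤ, ∀ u : Fin r → ℤ, ∀ x ∈ ℳ u, x ≠ 0 → c ≤ u := by
  classical
  obtain ⟨T, hT⟩ := Module.Finite.fg_top (R := S) (M := M)
  set F : Finset (Fin r → ℤ) := T.sup (fun t => (DirectSum.decompose ℳ t).support) with hF
  have main : ∀ x : M, ∀ u : Fin r → ℤ, (DirectSum.decompose ℳ x u : M) ≠ 0 →
      ∃ u₀ ∈ F, u₀ ≤ u := by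
    intro x
    have hx : x ∈ Submodule.span S (T : Set M) := hT ▸ Submodule.mem_top
    induction hx using Submodule.span_induction with
    | mem t ht =>
        intro u hu
        refine ⟨u, ?_, le_refl u⟩
        exact Finset.mem_sup.mpr ⟨t, ht, DFinsupp.mem_support_iff.mpr
          (fun h => hu (by rw [h]; simp))⟩
    | zero => intro u hu; simp at hu
    | add x y hx hy ihx ihy =>
        intro u hu
        rw [DirectSum.decompose_add, DirectSum.add_apply, AddSubgroup.coe_add] at hu
        by_cases h : (DirectSum.decompose ℳ x u : M) = 0
        · exact ihy u (by intro h'; rw [h, h'] at hu; simp at hu)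
        · exact ihx u h
    | smul a x hx ih =>
        intro u hu
        rw [my_comp_smul' 𝒜 ℳ hsmul] at hu
        obtain ⟨w, _, hw⟩ := Finset.exists_ne_zero_of_sum_ne_zero hu
        have h0w : (0 : Fin r → ℤ) ≤ w := by
          by_contra h
          have : ∃ j, w j < 0 := by
            simpa [Pi.le_def, not_forall, not_le] using h
          have hb := hsupp w this
          have : (DirectSum.decompose 𝒜 a w : S) = 0 := by
            have hmem : (DirectSum.decompose 𝒜 a w : S) ∈ (⊥ : AddSubgroup S) := by
              rw [← hb]; exact (DirectSum.decompose 𝒜 a w).2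
            simpa using hmem
          rw [this, zero_smul] at hw
          exact hw rfl
        have hx0 : (DirectSum.decompose ℳ x (u - w) : M) ≠ 0 := by
          intro h; rw [h, smul_zero] at hw; exact hw rfl
        obtain ⟨u₀, hu₀, hle⟩ := ih (u - w) hx0
        exact ⟨u₀, hu₀, le_trans hle (fun j => by have := h0w j; simp at this ⊢; omega)⟩
  rcases F.eq_empty_or_nonempty with hFe | hFne
  · refine ⟨0, fun u x hx hx0 => ?_⟩
    exfalso
    obtain ⟨u₀, hu₀, _⟩ := main x u
      (by rw [DirectSum.decompose_of_mem_same ℳ hx]; exact hx0)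
    rw [hFe] at hu₀; simp at hu₀
  · refine ⟨fun j => (F.image (fun v => v j)).min' (hFne.image _), fun u x hx hx0 => ?_⟩
    obtain ⟨u₀, hu₀, hle⟩ := main x u
      (by rw [DirectSum.decompose_of_mem_same ℳ hx]; exact hx0)
    intro j
    exact le_trans (Finset.min'_le _ _ (Finset.mem_image_of_mem _ hu₀)) (hle j)


theorem my_mem_closure
    (hsupp : ∀ v : Fin r → ℤ, (∃ j, v j < 0) → 𝒜 v = ⊥)
    (hsmul : ∀ v w : Fin r → ℤ, ∀ s ∈ 𝒜 v, ∀ t ∈ ℳ w, s • t ∈ ℳ (v + w))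
    (𝓜 : Ideal S)
    (h𝓜 : 𝓜 = Ideal.span (⋃ (v : Fin r → ℤ) (_ : v ≠ 0), (𝒜 v : Set S)))
    {x : M} (hx : x ∈ 𝓜 • (⊤ : Submodule S M)) (u : Fin r → ℤ) :
    (DirectSum.decompose ℳ x u : M) ∈ AddSubgroup.closure
      {z : M | ∃ (w : Fin r → ℤ) (s : S) (m : M),
        w ≠ 0 ∧ 0 ≤ w ∧ s ∈ 𝒜 w ∧ m ∈ ℳ (u - w) ∧ z = s • m} := by
  classical
  revert u
  refine Submodule.smul_induction_on hx ?_ ?_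
  · intro s hs n _
    rw [h𝓜] at hs
    have main : ∀ t ∈ Ideal.span (⋃ (v : Fin r → ℤ) (_ : v ≠ 0), (𝒜 v : Set S)),
        ∀ (m : M) (u : Fin r → ℤ), (DirectSum.decompose ℳ (t • m) u : M) ∈
          AddSubgroup.closure {z : M | ∃ (w : Fin r → ℤ) (s : S) (m : M),
            w ≠ 0 ∧ 0 ≤ w ∧ s ∈ 𝒜 w ∧ m ∈ ℳ (u - w) ∧ z = s • m} := by
      intro t ht
      induction ht using Submodule.span_induction with
      | mem s hsmem =>
          intro m u
          simp only [Set.mem_iUnion, SetLike.mem_coe] at hsmem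
          obtain ⟨w, hw, hsw⟩ := hsmem
          rw [my_comp_smul 𝒜 ℳ hsmul hsw m u]
          by_cases h0 : (0 : Fin r → ℤ) ≤ w
          · exact AddSubgroup.subset_closure
              ⟨w, s, _, hw, h0, hsw, (DirectSum.decompose ℳ m (u - w)).2, rfl⟩
          · have hs0 : s = 0 := by
              have hb := hsupp w (by simpa [Pi.le_def, not_forall, not_le] using h0)
              have hmem : s ∈ (⊥ : AddSubgroup S) := by rw [← hb]; exact hsw
              simpa using hmem
            simp only [hs0, zero_smul]
            exact zero_mem _
      | zero =>
          intro m u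
          simp only [zero_smul, DirectSum.decompose_zero, DirectSum.zero_apply,
            ZeroMemClass.coe_zero]
          exact zero_mem _
      | add s t _ _ ihs iht =>
          intro m u
          rw [add_smul, DirectSum.decompose_add, DirectSum.add_apply, AddSubgroup.coe_add]
          exact add_mem (ihs m u) (iht m u)
      | smul a s _ ih =>
          intro m u
          have h : (a • s) • m = s • (a • m) := by
            rw [smul_eq_mul, mul_comm, mul_smul]
          rw [h]
          exact ih (a • m) u
    exact fun u => main s hs n u
  · intro x y hx hy u
    rw [DirectSum.decompose_add, DirectSum.add_apply, AddSubgroup.coe_add]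
    exact add_mem (hx u) (hy u)

theorem my_key_lemma [Module.Finite S M]
    (hsupp : ∀ v : Fin r → ℤ, (∃ j, v j < 0) → 𝒜 v = ⊥)
    (hsmul : ∀ v w : Fin r → ℤ, ∀ s ∈ 𝒜 v, ∀ t ∈ ℳ w, s • t ∈ ℳ (v + w))
    (𝓜 : Ideal S)
    (h𝓜 : 𝓜 = Ideal.span (⋃ (v : Fin r → ℤ) (_ : v ≠ 0), (𝒜 v : Set S)))
    (v' : Fin r → ℤ)
    (H : ∀ v, v ≤ v' → v ≠ v' →
      (ℳ v : Set M) ⊆ ((𝓜 • (⊤ : Submodule S M) : Submodule S M) : Set M))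
    {y : M} (hy : y ∈ ℳ v') (hy2 : y ∈ 𝓜 • (⊤ : Submodule S M)) : y = 0 := by
  classical
  obtain ⟨c, hc⟩ := my_support_bound 𝒜 ℳ hsupp hsmul
  set μ : (Fin r → ℤ) → ℕ := fun u => ∑ j, (u j - c j).toNat with hμ
  have key : ∀ n : ℕ, ∀ u, u ≤ v' → μ u ≤ n →
      ∀ x ∈ ℳ u, x ∈ 𝓜 • (⊤ : Submodule S M) → x = 0 := by
    intro n
    induction n using Nat.strong_induction_on with
    | _ n ih =>
      intro u huv hun x hxu hxM
      have hx := my_mem_closure 𝒜 ℳ hsupp hsmul 𝓜 h𝓜 hxM u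
      rw [DirectSum.decompose_of_mem_same ℳ hxu] at hx
      have hclosure : AddSubgroup.closure {z : M | ∃ (w : Fin r → ℤ) (s : S) (m : M),
          w ≠ 0 ∧ 0 ≤ w ∧ s ∈ 𝒜 w ∧ m ∈ ℳ (u - w) ∧ z = s • m} ≤ ⊥ := by
        rw [AddSubgroup.closure_le]
        rintro z ⟨w, s, m, hw, h0w, hsw, hm, rfl⟩
        simp only [AddSubgroup.coe_bot, Set.mem_singleton_iff]
        have huwu : u - w ≤ u := fun j => by have := h0w j; simp at this ⊢; omega
        have hne : u - w ≠ u := by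
          intro h
          obtain ⟨j, hj⟩ := Function.ne_iff.mp hw
          have := congrFun h j
          simp at this hj
          omega
        have hu' : u - w ≤ v' := le_trans huwu huv
        have hne' : u - w ≠ v' := by
          intro h
          exact hne (le_antisymm huwu (h ▸ huv))
        by_cases hm0 : m = 0
        · simp [hm0]
        · exfalso
          have hcu : c ≤ u - w := hc _ m hm hm0
          have hmM : m ∈ 𝓜 • (⊤ : Submodule S M) := H _ hu' hne' hm
          have hlt : μ (u - w) < μ u := by
            obtain ⟨j₀, hj₀⟩ := Function.ne_iff.mp hw
            refine Finset.sum_lt_sum (fun j _ => ?_) ⟨j₀, Finset.mem_univ j₀, ?_⟩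
            · have h1 := h0w j
              simp at h1 ⊢
              omega
            · have h1 := h0w j₀
              have h2 := hcu j₀
              simp at h1 h2 hj₀ ⊢
              omega
          exact hm0 (ih (μ (u - w)) (lt_of_lt_of_le hlt hun) (u - w) hu' le_rfl m hm hmM)
      simpa using hclosure hx
  exact key (μ v') v' le_rfl le_rfl y hy hy2

end aux2



/-- Let `S` be a noetherian ℕʳ-graded algebra over a field `k` with `S₀ = k`, homogeneous
maximal ideal `𝓜` (generated by the elements of nonzero degree), and let
`⋯ → D_{p+1} → D_p → ⋯ → D₁ → D₀` be an exact sequence of finitely generated ℤʳ-graded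
`S`-modules with `Im(D_{p+1} → D_p) ⊆ 𝓜·D_p`.  Let `V p` be the set of degrees of a
minimal homogeneous generating system of `D_p` (the degrees `v` where `(D_p/𝓜D_p)_v ≠ 0`,
i.e. `(D_p)_v ⊄ 𝓜D_p`).  Then the componentwise minima satisfy `n_p ≤ n_{p+1}` and the
lexicographic minima satisfy `m_p <_lex m_{p+1}`; equivalently, every `v' ∈ V (p+1)`
dominates some element of `V p` in each coordinate, and strictly dominates some element of
`V p` lexicographically. -/
theorem stmt1 {k S : Type*} [Field k] [CommRing S] [Algebra k S] [IsNoetherianRing S]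
    (r : ℕ) (𝒜 : (Fin r → ℤ) → AddSubgroup S) [GradedRing 𝒜]
    (hsupp : ∀ v : Fin r → ℤ, (∃ j, v j < 0) → 𝒜 v = ⊥)
    (hzero : (𝒜 (0 : Fin r → ℤ) : Set S) = Set.range (algebraMap k S))
    (𝓜 : Ideal S)
    (h𝓜 : 𝓜 = Ideal.span (⋃ (v : Fin r → ℤ) (_ : v ≠ 0), (𝒜 v : Set S)))
    (D : ℕ → Type*) [∀ p, AddCommGroup (D p)] [∀ p, Module S (D p)]
    [∀ p, Module.Finite S (D p)]
    (ℳ : ∀ p, (Fin r → ℤ) → AddSubgroup (D p))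
    [∀ p, DirectSum.Decomposition (ℳ p)]
    (hsmul : ∀ (p : ℕ) (v w : Fin r → ℤ), ∀ s ∈ 𝒜 v, ∀ t ∈ ℳ p w, s • t ∈ ℳ p (v + w))
    (f : ∀ p : ℕ, D (p + 1) →ₗ[S] D p)
    (hgradedf : ∀ (p : ℕ) (v : Fin r → ℤ), ∀ t ∈ ℳ (p + 1) v, f p t ∈ ℳ p v)
    (hexact : ∀ p : ℕ, Function.Exact (f (p + 1)) (f p))
    (him : ∀ p : ℕ, LinearMap.range (f p) ≤ 𝓜 • (⊤ : Submodule S (D p)))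
    (V : ℕ → Set (Fin r → ℤ))
    (hV : ∀ p, V p = {v | ¬ (ℳ p v : Set (D p)) ⊆
      ((𝓜 • (⊤ : Submodule S (D p)) : Submodule S (D p)) : Set (D p))}) :
    ∀ p : ℕ,
      (∀ v' ∈ V (p + 1), ∀ j : Fin r, ∃ v ∈ V p, v j ≤ v' j) ∧
      (∀ v' ∈ V (p + 1), ∃ v ∈ V p, toLex v < toLex v') := by
  intro p
  have main : ∀ v' ∈ V (p + 1), ∃ v ∈ V p, v ≤ v' ∧ v ≠ v' := by
    intro v' hv'
    rw [hV (p + 1)] at hv'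
    simp only [Set.mem_setOf_eq, Set.not_subset] at hv'
    obtain ⟨x, hx1, hx2⟩ := hv'
    have hy1 : f p x ∈ ℳ p v' := hgradedf p v' x hx1
    have hy2 : f p x ∈ 𝓜 • (⊤ : Submodule S (D p)) :=
      him p (LinearMap.mem_range_self (f p) x)
    have hy0 : f p x ≠ 0 := by
      intro h
      obtain ⟨x', hx'⟩ := (hexact p x).mp h
      exact hx2 (him (p + 1) (LinearMap.mem_range.mpr ⟨x', hx'⟩))
    by_contra hcon
    push_neg at hcon
    have H : ∀ v, v ≤ v' → v ≠ v' → (ℳ p v : Set (D p)) ⊆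
        ((𝓜 • (⊤ : Submodule S (D p)) : Submodule S (D p)) : Set (D p)) := by
      intro v h1 h2
      by_contra hns
      have hvV : v ∈ V p := by rw [hV p]; exact hns
      exact h2 (hcon v hvV h1)
    exact hy0 (my_key_lemma 𝒜 (ℳ p) hsupp (hsmul p) 𝓜 h𝓜 v' H hy1 hy2)
  refine ⟨fun v' hv' j => ?_, fun v' hv' => ?_⟩
  · obtain ⟨v, hv, hle, _⟩ := main v' hv'
    exact ⟨v, hv, hle j⟩
  · obtain ⟨v, hv, hle, hne⟩ := main v' hv'
    haveI : WellFoundedLT (Fin r) := inferInstance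
    exact ⟨v, hv, Pi.toLex_strictMono (lt_of_le_of_ne hle hne)⟩
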